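/- (Discrete-time dimensionality reduction.) Let N ∈ ℕ and let u : {0,1,…,N} × ℕ × [0,∞) → ℝ satisfy the terminal condition u(N, I, S) = I for all I ∈ ℕ and S ≥ 0, and the Bellman recursion u(n-1, I, S) = sup over b ∈ [0, S] of ( ∫₀^b u(n, I+1, S-p) f(p) dp + (1 - F(b)) u(n, I, S) ) for all 1 ≤ n ≤ N, I ∈ ℕ, S ≥ 0, where for each n, I, S the function p ↦ u(n, I, S-p) is integrable on [0, S] with respect to f(p) dp. Then u(n, I, S) = I + u(n, 0, S) for all 0 ≤ n ≤ N, I ∈ ℕ and S ≥ 0. -/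

import Mathlib

open MeasureTheory Filter Set

lemma sSup_const_add' {a : ℝ} {s : Set ℝ} (hne : s.Nonempty) (hbd : BddAbove s) :
    sSup ((fun x => a + x) '' s) = a + sSup s := by
  obtain ⟨B, hB⟩ := hbd
  have hbd' : BddAbove ((fun x => a + x) '' s) := by
    refine ⟨a + B, ?_⟩
    rintro y ⟨x, hx, rfl⟩
    exact (add_le_add_iff_left a).mpr (hB hx)
  apply le_antisymm
  · apply csSup_le (hne.image _)
    rintro y ⟨x, hx, rfl⟩
    exact (add_le_add_iff_left a).mpr (le_csSup ⟨B, hB⟩ hx)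
  · have : sSup s ≤ sSup ((fun x => a + x) '' s) - a := by
      apply csSup_le hne
      intro x hx
      have h2 : a + x ≤ sSup ((fun x => a + x) '' s) :=
        le_csSup hbd' (mem_image_of_mem _ hx)
      linarith
    linarith


/-- (Discrete-time dimensionality reduction.) If `u` satisfies the terminal condition
`u(N,I,S) = I` and the Bellman recursion
`u(n,I,S) = sup_{b ∈ [0,S]} ( ∫₀^b u(n+1,I+1,S-p) f(p) dp + (1 - F(b)) u(n+1,I,S) )`
for `n < N`, with the stated integrability, then `u(n,I,S) = I + u(n,0,S)` for all
`n ≤ N`, `I ∈ ℕ`, `S ≥ 0`. -/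
theorem stmt_19 (f F : ℝ → ℝ)
    (hf_cont : Continuous f)
    (hf_nonpos : ∀ p ≤ (0 : ℝ), f p = 0)
    (hf_pos : ∀ p : ℝ, 0 < p → 0 < f p)
    (hf_int : (∫ p in Set.Ioi (0 : ℝ), f p) = 1)
    (hF : ∀ b : ℝ, F b = ∫ p in (0 : ℝ)..b, f p)
    (N : ℕ) (u : ℕ → ℕ → ℝ → ℝ)
    (hterm : ∀ (I : ℕ) (S : ℝ), 0 ≤ S → u N I S = I)
    (hint : ∀ (n : ℕ) (I : ℕ) (S : ℝ), 0 ≤ S →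
      MeasureTheory.IntegrableOn (fun p : ℝ => u n I (S - p) * f p) (Set.Icc 0 S))
    (hbell : ∀ (n : ℕ), n < N → ∀ (I : ℕ) (S : ℝ), 0 ≤ S →
      u n I S = sSup ((fun b : ℝ =>
        (∫ p in (0 : ℝ)..b, u (n + 1) (I + 1) (S - p) * f p)
          + (1 - F b) * u (n + 1) I S) '' Set.Icc 0 S)) :
    ∀ (n : ℕ), n ≤ N → ∀ (I : ℕ) (S : ℝ), 0 ≤ S →
      u n I S = I + u n 0 S := by
  have key : ∀ d n : ℕ, n + d = N → ∀ (I : ℕ) (S : ℝ), 0 ≤ S → u n I S = I + u n 0 S := by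
    intro d
    induction d with
    | zero =>
      intro n hn I S hS
      have hnN : n = N := by omega
      subst hnN
      rw [hterm I S hS, hterm 0 S hS]
      simp
    | succ d ih =>
      intro n hn I S hS
      have hnN : n < N := by omega
      have IH : ∀ (I : ℕ) (T : ℝ), 0 ≤ T → u (n+1) I T = I + u (n+1) 0 T :=
        ih (n+1) (by omega)
      -- the common function
      set C : ℝ → ℝ := fun b =>
        F b + (∫ p in (0:ℝ)..b, u (n+1) 0 (S - p) * f p) + (1 - F b) * u (n+1) 0 S with hC
      -- pointwise identity
      have hpt : ∀ (J : ℕ), ∀ b ∈ Icc (0:ℝ) S,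
          (∫ p in (0:ℝ)..b, u (n+1) (J+1) (S - p) * f p) + (1 - F b) * u (n+1) J S
            = (J : ℝ) + C b := by
        intro J b hb
        obtain ⟨hb0, hbS⟩ := hb
        have huIcc : uIcc (0:ℝ) b = Icc 0 b := uIcc_of_le hb0
        have hcongr : (∫ p in (0:ℝ)..b, u (n+1) (J+1) (S - p) * f p)
            = ∫ p in (0:ℝ)..b, ((J:ℝ) + 1) * f p + u (n+1) 0 (S - p) * f p := by
          apply intervalIntegral.integral_congr
          intro p hp
          rw [huIcc] at hp
          dsimp only
          have hSp : 0 ≤ S - p := by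
            have := hp.2; linarith
          rw [IH (J+1) (S - p) hSp]
          push_cast
          ring
        have hif : IntervalIntegrable (fun p => ((J:ℝ) + 1) * f p) volume 0 b :=
          (continuous_const.mul hf_cont).intervalIntegrable 0 b
        have hih : IntervalIntegrable (fun p => u (n+1) 0 (S - p) * f p) volume 0 b := by
          apply MeasureTheory.IntegrableOn.intervalIntegrable
          rw [huIcc]
          exact (hint (n+1) 0 S hS).mono_set (Icc_subset_Icc le_rfl hbS)
        rw [hcongr, intervalIntegral.integral_add hif hih,
          intervalIntegral.integral_const_mul, ← hF b, IH J S hS]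
        simp only [hC]
        push_cast
        ring
      -- bddAbove of C '' Icc 0 S via continuity
      have hFcont : Continuous F := by
        have : Continuous fun b => ∫ p in (0:ℝ)..b, f p :=
          intervalIntegral.continuous_primitive
            (fun a b => hf_cont.intervalIntegrable a b) 0
        have hFeq : F = fun b => ∫ p in (0:ℝ)..b, f p := funext hF
        rw [hFeq]; exact this
      have hCcont : ContinuousOn C (Icc 0 S) := by
        have h1 : ContinuousOn (fun b => ∫ p in (0:ℝ)..b, u (n+1) 0 (S - p) * f p)
            (Icc 0 S) := by
          have := intervalIntegral.continuousOn_primitive_interval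
            (f := fun p => u (n+1) 0 (S - p) * f p) (μ := volume) (a := 0) (b := S)
            (by rw [uIcc_of_le hS]; exact hint (n+1) 0 S hS)
          rwa [uIcc_of_le hS] at this
        exact ((hFcont.continuousOn.add h1).add
          ((continuous_const.sub hFcont).continuousOn.mul continuousOn_const))
      have hcomp : IsCompact (C '' Icc 0 S) :=
        (isCompact_Icc).image_of_continuousOn hCcont
      have hbd : BddAbove (C '' Icc 0 S) := hcomp.bddAbove
      have hne : (C '' Icc 0 S).Nonempty := (nonempty_Icc.mpr hS).image C
      -- rewrite both sSup's
      have himg : ∀ (J : ℕ), ((fun b : ℝ =>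
          (∫ p in (0 : ℝ)..b, u (n + 1) (J + 1) (S - p) * f p)
            + (1 - F b) * u (n + 1) J S) '' Icc 0 S)
          = (fun x => (J:ℝ) + x) '' (C '' Icc 0 S) := by
        intro J
        rw [image_image]
        exact image_congr (hpt J)
      rw [hbell n hnN I S hS, hbell n hnN 0 S hS, himg I, himg 0,
        sSup_const_add' hne hbd, sSup_const_add' hne hbd]
      push_cast
      ring
  intro n hn I S hS
  exact key (N - n) n (by omega) I S hS
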